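/- arXiv:2001.03646 — 7 statements merged into one kernel-verified Lean document; each statement's English description precedes it below -/
import Mathlib

section
/- Let t^B, t^C > 0 and b^B, b^C ≥ 0 be real numbers with 4·t^B·t^C > (b^B + b^C)², and let U₀^B, U₀^C, f^B, f^C be real numbers. Define the equilibrium prices p^B* = (−(b^B)²·f^B − (b^C)²·U₀^B + (2·t^B·t^C − b^B·b^C)·(f^B + U₀^B) + t^B·(b^B − b^C)·(U₀^C − f^C))/(4·t^B·t^C − (b^B + b^C)²) and p^C* = (−(b^C)²·f^C − (b^B)²·U₀^C + (2·t^B·t^C − b^B·b^C)·(f^C + U₀^C) + t^C·(b^B − b^C)·(f^B − U₀^B))/(4·t^B·t^C − (b^B + b^C)²). Then (p^B*, p^C*) is a global maximizer of the monopoly profit function R over ℝ²: for all (p^B, p^C) ∈ ℝ², R(p^B, p^C) ≤ R(p^B*, p^C*). -/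
/-- The equilibrium prices of the monopoly CSP model are a global maximizer of
the profit function. -/
theorem monopoly_equilibrium_prices_maximize
    (tB tC bB bC U0B U0C fB fC : ℝ)
    (htB : 0 < tB) (htC : 0 < tC) (hbB : 0 ≤ bB) (hbC : 0 ≤ bC)
    (hA1 : 4 * tB * tC > (bB + bC) ^ 2)
    (pBstar pCstar : ℝ)
    (hpB : pBstar = (-(bB ^ 2) * fB - bC ^ 2 * U0B
        + (2 * tB * tC - bB * bC) * (fB + U0B)
        + tB * (bB - bC) * (U0C - fC)) / (4 * tB * tC - (bB + bC) ^ 2))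
    (hpC : pCstar = (-(bC ^ 2) * fC - bB ^ 2 * U0C
        + (2 * tB * tC - bB * bC) * (fC + U0C)
        + tC * (bB - bC) * (fB - U0B)) / (4 * tB * tC - (bB + bC) ^ 2)) :
    ∀ pB pC : ℝ,
      (pB - fB) * (bB * (U0C - pC) + tC * (U0B - pB)) / (tB * tC - bB * bC)
        + (pC - fC) * (bC * (U0B - pB) + tB * (U0C - pC)) / (tB * tC - bB * bC)
      ≤ (pBstar - fB) * (bB * (U0C - pCstar) + tC * (U0B - pBstar)) / (tB * tC - bB * bC)
        + (pCstar - fC) * (bC * (U0B - pBstar) + tB * (U0C - pCstar)) / (tB * tC - bB * bC) := by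
  intro pB pC
  have hD : (0:ℝ) < 4 * tB * tC - (bB + bC) ^ 2 := by linarith
  have hDne : (4 * tB * tC - (bB + bC) ^ 2) ≠ 0 := ne_of_gt hD
  have hE : (0:ℝ) < tB * tC - bB * bC := by nlinarith [sq_nonneg (bB - bC)]
  -- first order conditions
  have hFOC1 : 2 * tC * pBstar + (bB + bC) * pCstar
      = bB * U0C + tC * U0B + tC * fB + bC * fC := by
    rw [hpB, hpC, mul_div_assoc', mul_div_assoc', ← add_div, div_eq_iff hDne]; ring
  have hFOC2 : (bB + bC) * pBstar + 2 * tB * pCstar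
      = bC * U0B + tB * U0C + tB * fC + bB * fB := by
    rw [hpB, hpC, mul_div_assoc', mul_div_assoc', ← add_div, div_eq_iff hDne]; ring
  set x := pB - pBstar with hx
  set y := pC - pCstar with hy
  have key : ((pBstar - fB) * (bB * (U0C - pCstar) + tC * (U0B - pBstar))
        + (pCstar - fC) * (bC * (U0B - pBstar) + tB * (U0C - pCstar)))
      - ((pB - fB) * (bB * (U0C - pC) + tC * (U0B - pB))
        + (pC - fC) * (bC * (U0B - pB) + tB * (U0C - pC)))
      = tC * x ^ 2 + (bB + bC) * x * y + tB * y ^ 2 := by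
    rw [hx, hy]
    linear_combination (pB - pBstar) * hFOC1 + (pC - pCstar) * hFOC2
  have hq : 0 ≤ tC * x ^ 2 + (bB + bC) * x * y + tB * y ^ 2 := by
    nlinarith [sq_nonneg ((bB + bC) * x + 2 * tB * y), sq_nonneg x,
      mul_nonneg (le_of_lt hD) (sq_nonneg x)]
  rw [← add_div, ← add_div, div_le_div_iff_of_pos_right hE]
  linarith [key, hq]
end

section
/- Let t^B, t^C > 0 and b^B, b^C ≥ 0 be real numbers with 4·t^B·t^C > (b^B + b^C)², and let U₀^B, U₀^C, f^B, f^C be real numbers. At the equilibrium prices p^B* = (−(b^B)²·f^B − (b^C)²·U₀^B + (2·t^B·t^C − b^B·b^C)·(f^B + U₀^B) + t^B·(b^B − b^C)·(U₀^C − f^C))/(4·t^B·t^C − (b^B + b^C)²) and p^C* = (−(b^C)²·f^C − (b^B)²·U₀^C + (2·t^B·t^C − b^B·b^C)·(f^C + U₀^C) + t^C·(b^B − b^C)·(f^B − U₀^B))/(4·t^B·t^C − (b^B + b^C)²), the demand functions take the values q^B = ((U₀^C − f^C)·(b^B + b^C) + 2·t^C·(U₀^B − f^B))/(4·t^B·t^C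 − (b^B + b^C)²) and q^C = ((b^B + b^C)·(U₀^B − f^B) + 2·t^B·(U₀^C − f^C))/(4·t^B·t^C − (b^B + b^C)²). -/
/-- At the monopoly equilibrium prices, the demand functions take the stated
closed-form values. -/
theorem monopoly_equilibrium_demands
    (tB tC bB bC U0B U0C fB fC : ℝ)
    (htB : 0 < tB) (htC : 0 < tC) (hbB : 0 ≤ bB) (hbC : 0 ≤ bC)
    (hA1 : 4 * tB * tC > (bB + bC) ^ 2)
    (pBstar pCstar : ℝ)
    (hpB : pBstar = (-(bB ^ 2) * fB - bC ^ 2 * U0B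
        + (2 * tB * tC - bB * bC) * (fB + U0B)
        + tB * (bB - bC) * (U0C - fC)) / (4 * tB * tC - (bB + bC) ^ 2))
    (hpC : pCstar = (-(bC ^ 2) * fC - bB ^ 2 * U0C
        + (2 * tB * tC - bB * bC) * (fC + U0C)
        + tC * (bB - bC) * (fB - U0B)) / (4 * tB * tC - (bB + bC) ^ 2)) :
    (bB * (U0C - pCstar) + tC * (U0B - pBstar)) / (tB * tC - bB * bC)
      = ((U0C - fC) * (bB + bC) + 2 * tC * (U0B - fB)) / (4 * tB * tC - (bB + bC) ^ 2) ∧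
    (bC * (U0B - pBstar) + tB * (U0C - pCstar)) / (tB * tC - bB * bC)
      = ((bB + bC) * (U0B - fB) + 2 * tB * (U0C - fC)) / (4 * tB * tC - (bB + bC) ^ 2) := by
  have hD : 4 * tB * tC - (bB + bC) ^ 2 > 0 := by linarith
  have hd : tB * tC - bB * bC > 0 := by nlinarith [sq_nonneg (bB - bC)]
  subst hpB hpC
  have hD' : 4 * tB * tC - (bB + bC) ^ 2 ≠ 0 := hD.ne'
  have hd' : tB * tC - bB * bC ≠ 0 := hd.ne'
  generalize hDd : 4 * tB * tC - (bB + bC) ^ 2 = D at *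
  generalize hdd : tB * tC - bB * bC = d at *
  constructor <;> (field_simp; rw [← hDd, ← hdd]; ring)
end

section
/- Let t^B, t^C > 0 and b^B, b^C ≥ 0 be real numbers with 4·t^B·t^C > (b^B + b^C)², and let U₀^B, U₀^C, f^B, f^C be real numbers. At the profit-maximizing equilibrium prices p^B*, p^C* given by the formulas p^B* = (−(b^B)²·f^B − (b^C)²·U₀^B + (2·t^B·t^C − b^B·b^C)·(f^B + U₀^B) + t^B·(b^B − b^C)·(U₀^C − f^C))/(4·t^B·t^C − (b^B + b^C)²) and p^C* = (−(b^C)²·f^C − (b^B)²·U₀^C + (2·t^B·t^C − b^B·b^C)·(f^C + U₀^C) + t^C·(b^B − b^C)·(f^B − U₀^B))/(4·t^B·t^C − (b^B + b^C)²), the monopoly platform's profit equals R(p^B*, p^C*) = ((b^B + b^C)·(f^B − U₀^B)·(f^C − U₀^C) + t^C·(f^B − U₀^B)² + t^B·(f^C − U₀^C)²)/(4·t^B·t^C − (b^B + b^C)²). -/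
/-- At the monopoly equilibrium prices, the platform's profit takes the stated
closed-form value. -/
theorem monopoly_equilibrium_profit
    (tB tC bB bC U0B U0C fB fC : ℝ)
    (htB : 0 < tB) (htC : 0 < tC) (hbB : 0 ≤ bB) (hbC : 0 ≤ bC)
    (hA1 : 4 * tB * tC > (bB + bC) ^ 2)
    (pBstar pCstar : ℝ)
    (hpB : pBstar = (-(bB ^ 2) * fB - bC ^ 2 * U0B
        + (2 * tB * tC - bB * bC) * (fB + U0B)
        + tB * (bB - bC) * (U0C - fC)) / (4 * tB * tC - (bB + bC) ^ 2))
    (hpC : pCstar = (-(bC ^ 2) * fC - bB ^ 2 * U0C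
        + (2 * tB * tC - bB * bC) * (fC + U0C)
        + tC * (bB - bC) * (fB - U0B)) / (4 * tB * tC - (bB + bC) ^ 2)) :
    (pBstar - fB) * ((bB * (U0C - pCstar) + tC * (U0B - pBstar)) / (tB * tC - bB * bC))
      + (pCstar - fC) * ((bC * (U0B - pBstar) + tB * (U0C - pCstar)) / (tB * tC - bB * bC))
    = ((bB + bC) * (fB - U0B) * (fC - U0C) + tC * (fB - U0B) ^ 2 + tB * (fC - U0C) ^ 2)
        / (4 * tB * tC - (bB + bC) ^ 2) := by
  have h1 : tB * tC - bB * bC > 0 := by nlinarith [sq_nonneg (bB - bC)]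
  have h2 : 4 * tB * tC - (bB + bC) ^ 2 > 0 := by linarith
  subst hpB hpC
  have h3 : (4 * tB * tC - (bB + bC) ^ 2) ≠ 0 := ne_of_gt h2
  have h4 : tB * tC - bB * bC ≠ 0 := ne_of_gt h1
  have key : ∀ X Y : ℝ, (X / (4 * tB * tC - (bB + bC) ^ 2) - fB) * ((bB * (U0C - Y / (4 * tB * tC - (bB + bC) ^ 2)) + tC * (U0B - X / (4 * tB * tC - (bB + bC) ^ 2))) / (tB * tC - bB * bC)) + (Y / (4 * tB * tC - (bB + bC) ^ 2) - fC) * ((bC * (U0B - X / (4 * tB * tC - (bB + bC) ^ 2)) + tB * (U0C - Y / (4 * tB * tC - (bB + bC) ^ 2))) / (tB * tC - bB * bC)) = ((X - fB * (4 * tB * tC - (bB + bC) ^ 2)) * (bB * (U0C * (4 * tB * tC - (bB + bC) ^ 2) - Y) + tC * (U0B * (4 * tB * tC - (bB + bC) ^ 2) - X)) + (Y - fC * (4 * tB * tC - (bB + bC) ^ 2)) * (bC * (U0B * (4 * tB * tC - (bB + bC) ^ 2) - X) + tB * (U0C * (4 * tB * tC - (bB + bC) ^ 2) - Y))) / ((4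 * tB * tC - (bB + bC) ^ 2) ^ 2 * (tB * tC - bB * bC)) := by
    intro X Y
    field_simp
  rw [key, div_eq_div_iff (mul_ne_zero (pow_ne_zero 2 h3) h4) h3]
  ring
end

section
/- (Lemma 1: no multi-homing under condition (B2).) Let p_W^B ≥ 0, p_N^B ≥ 0, q_W^C ≥ 0, q_N^C ≥ 0, α_W, α_N, U₀^B, t^B be real numbers with t^B > α_W·q_W^C + α_N·q_N^C. Define, for a worksite located at x ∈ [0,1], the single-homing utilities U_W^B(x) = U₀^B − p_W^B − t^B·x + α_W·q_W^C and U_N^B(x) = U₀^B − p_N^B − t^B·(1 − x) + α_N·q_N^C, and the multi-homing utility U_{NW}^B = U₀^B − (p_W^B + p_N^B) − t^B + α_W·q_W^C + α_N·q_N^C. Then for every x ∈ [0,1], U_{NW}^B < max(U_W^B(x), U_N^B(x)); that is, no worksite prefers multi-homing to its best single-homing option at any non-negative prices. -/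
/-- Lemma 1: under condition (B2), no worksite prefers multi-homing to its best
single-homing option at any non-negative prices. -/
theorem no_multihoming_under_B2
    (pWB pNB qWC qNC αW αN U0B tB : ℝ)
    (hpWB : 0 ≤ pWB) (hpNB : 0 ≤ pNB) (hqWC : 0 ≤ qWC) (hqNC : 0 ≤ qNC)
    (hB2 : tB > αW * qWC + αN * qNC) :
    ∀ x ∈ Set.Icc (0 : ℝ) 1,
      U0B - (pWB + pNB) - tB + αW * qWC + αN * qNC <
        max (U0B - pWB - tB * x + αW * qWC)
            (U0B - pNB - tB * (1 - x) + αN * qNC) := by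
  intro x hx
  rcases le_or_gt (tB * x) (αW * qWC) with h | h
  · apply lt_max_of_lt_left
    nlinarith
  · apply lt_max_of_lt_right
    nlinarith
end

section
/- (Proposition 3, equilibrium commuter prices as mutual best responses.) Let t^C > 0 and α_W, α_N, f_W^B, f_N^B, f_W^C, f_N^C be real numbers. Define p_W* = (f_N^C − α_N)/3 + 2·(f_W^C − α_W)/3 + t^C and p_N* = 2·(f_N^C − α_N)/3 + (f_W^C − α_W)/3 + t^C. Then p_W* maximizes the WF CSP's profit given p_N*: for every p ∈ ℝ, −f_W^B + (p + α_W − f_W^C)·(1/2 + (p_N* − p)/(2·t^C)) ≤ −f_W^B + (p_W* + α_W − f_W^C)·(1/2 + (p_N* − p_W*)/(2·t^C)); and symmetrically p_N* maximizes the NWF CSP's profit given p_W*: for every p ∈ ℝ, −f_N^B + (p + α_N − f_N^C)·(1/2 + (p_W* − p)/(2·t^C)) ≤ −f_N^B + (p_N* + α_N − f_N^C)·(1/2 + (p_W* − p_N*)/(2·t^C)). -/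
/-- Proposition 3: the equilibrium commuter prices are mutual best responses. -/
theorem duopoly_onesided_best_responses
    (tC αW αN fWB fNB fWC fNC : ℝ)
    (htC : 0 < tC)
    (pWstar pNstar : ℝ)
    (hpW : pWstar = (fNC - αN) / 3 + 2 * (fWC - αW) / 3 + tC)
    (hpN : pNstar = 2 * (fNC - αN) / 3 + (fWC - αW) / 3 + tC) :
    (∀ p : ℝ,
      -fWB + (p + αW - fWC) * (1 / 2 + (pNstar - p) / (2 * tC))
        ≤ -fWB + (pWstar + αW - fWC) * (1 / 2 + (pNstar - pWstar) / (2 * tC))) ∧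
    (∀ p : ℝ,
      -fNB + (p + αN - fNC) * (1 / 2 + (pWstar - p) / (2 * tC))
        ≤ -fNB + (pNstar + αN - fNC) * (1 / 2 + (pWstar - pNstar) / (2 * tC))) := by
  subst hpW hpN
  have h := htC.ne'
  constructor <;> intro p <;>
    rw [← sub_nonneg, show (2 : ℝ) * tC = 2 * tC from rfl] <;>
    have key : ∀ a b : ℝ, 0 ≤ (a - b) ^ 2 / (2 * tC) := fun a b => by positivity
  · calc (0:ℝ) ≤ (p - ((fNC - αN) / 3 + 2 * (fWC - αW) / 3 + tC)) ^ 2 / (2 * tC) := key _ _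
      _ = _ := by field_simp; ring
  · calc (0:ℝ) ≤ (p - (2 * (fNC - αN) / 3 + (fWC - αW) / 3 + tC)) ^ 2 / (2 * tC) := key _ _
      _ = _ := by field_simp; ring
end

section
/- (Proposition 3, equilibrium worksite prices and profits.) Let t^C > 0 and α_W, α_N, f_W^B, f_N^B, f_W^C, f_N^C be real numbers, set α⁻ = α_N − α_W, and let p_W* = (f_N^C − α_N)/3 + 2·(f_W^C − α_W)/3 + t^C and p_N* = 2·(f_N^C − α_N)/3 + (f_W^C − α_W)/3 + t^C. Then the WF commuter share is q_W^C = 1/2 + (p_N* − p_W*)/(2·t^C) = 1/2 + (f_N^C − f_W^C − α⁻)/(6·t^C), the full-extraction worksite prices are p_W^B = α_W·q_W^C = (1/2 + (f_N^C − f_W^C − α⁻)/(6·t^C))·α_W and p_N^B = α_N·(1 − q_W^C) = (1/2 + (f_W^C − f_N^C + α⁻)/(6·t^C))·α_N, and the equilibrium profits equal R_W = −f_W^B + ((f_N^C − f_W^C − α⁻)/(6·t^C) + 1/2)·((f_N^C − f_W^C − α⁻)/3 + t^C) and R_N = −f_N^B + ((f_W^C − f_N^C + α⁻)/(6·t^C)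 + 1/2)·((f_W^C − f_N^C + α⁻)/3 + t^C). -/
/-- Proposition 3: equilibrium commuter share, full-extraction worksite prices,
and profits in the one-sided duopoly model. -/
theorem duopoly_onesided_equilibrium_values
    (tC αW αN fWB fNB fWC fNC : ℝ)
    (htC : 0 < tC)
    (αm : ℝ) (hαm : αm = αN - αW)
    (pWstar pNstar : ℝ)
    (hpW : pWstar = (fNC - αN) / 3 + 2 * (fWC - αW) / 3 + tC)
    (hpN : pNstar = 2 * (fNC - αN) / 3 + (fWC - αW) / 3 + tC)
    (qWC : ℝ) (hq : qWC = 1 / 2 + (pNstar - pWstar) / (2 * tC)) :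
    qWC = 1 / 2 + (fNC - fWC - αm) / (6 * tC) ∧
    αW * qWC = (1 / 2 + (fNC - fWC - αm) / (6 * tC)) * αW ∧
    αN * (1 - qWC) = (1 / 2 + (fWC - fNC + αm) / (6 * tC)) * αN ∧
    -fWB + (pWstar + αW - fWC) * qWC
      = -fWB + ((fNC - fWC - αm) / (6 * tC) + 1 / 2) * ((fNC - fWC - αm) / 3 + tC) ∧
    -fNB + (pNstar + αN - fNC) * (1 - qWC)
      = -fNB + ((fWC - fNC + αm) / (6 * tC) + 1 / 2) * ((fWC - fNC + αm) / 3 + tC) := by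
  subst hαm hpW hpN hq
  have h : (tC : ℝ) ≠ 0 := ne_of_gt htC
  refine ⟨by field_simp; ring, by field_simp; ring, by field_simp; ring, by field_simp; ring, by field_simp; ring⟩
end

section
/- (Maximal deviation profit when the WF CSP stops serving worksites.) Let t^C > 0 and α_W, α_N, f_W^C, f_N^C be real numbers, and let p_N* = 2·(f_N^C − α_N)/3 + (f_W^C − α_W)/3 + t^C be the NWF CSP's equilibrium commuter price. Then for every p ∈ ℝ, (p − f_W^C)·(1/2 + (p_N* − p)/(2·t^C)) ≤ (2·α_N + α_W − 2·f_N^C + 2·f_W^C − 6·t^C)²/(72·t^C), with equality at p = t^C + f_N^C/3 − α_N/3 + 2·f_W^C/3 − α_W/6; that is, the maximal profit the WF CSP can earn from commuters alone, when not serving worksites, equals R̃_W = (2·α_N + α_W − 2·f_N^C + 2·f_W^C − 6·t^C)²/(72·t^C). -/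
/-- Maximal deviation profit of the WF CSP when it stops serving worksites. -/
theorem deviation_profit_bound
    (tC αW αN fWC fNC : ℝ)
    (htC : 0 < tC)
    (pNstar : ℝ)
    (hpN : pNstar = 2 * (fNC - αN) / 3 + (fWC - αW) / 3 + tC) :
    (∀ p : ℝ,
      (p - fWC) * (1 / 2 + (pNstar - p) / (2 * tC))
        ≤ (2 * αN + αW - 2 * fNC + 2 * fWC - 6 * tC) ^ 2 / (72 * tC)) ∧
    (tC + fNC / 3 - αN / 3 + 2 * fWC / 3 - αW / 6 - fWC)
        * (1 / 2 + (pNstar - (tC + fNC / 3 - αN / 3 + 2 * fWC / 3 - αW / 6)) / (2 * tC))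
      = (2 * αN + αW - 2 * fNC + 2 * fWC - 6 * tC) ^ 2 / (72 * tC) := by
  subst hpN
  have h := htC.ne'
  constructor
  · intro p
    rw [← sub_nonneg]
    have : (2 * αN + αW - 2 * fNC + 2 * fWC - 6 * tC) ^ 2 / (72 * tC)
        - (p - fWC) * (1 / 2 + (2 * (fNC - αN) / 3 + (fWC - αW) / 3 + tC - p) / (2 * tC))
        = (6 * p - (6 * tC + 2 * fNC - 2 * αN + 4 * fWC - αW)) ^ 2 / (72 * tC) := by
      field_simp
      ring
    rw [this]
    positivity
  · field_simp
    ring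
end
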